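/- For a subset I of {1,…,n}, the homogeneous multilinear polynomial hₙ(I) := ψ(lₙ·Ī) ∈ ℤ[x₁,…,xₙ] is divisible by x₁ − x₂, and the quotient pₙ(I) satisfies: pₙ({i}) = (−1)^{i−1} C(n−1, i−1) for singletons, and pₙ(I) = p_{n−1}(I) − p_{n−1}(ζₙ I) otherwise, with the convention p_{n−1}(I') = p_{n−1}(I'∖{n})·xₙ whenever n ∈ I'. -/

import Mathlib

open MvPolynomial

/-- The left-normed multilinear Lie bracketing `lₙ = (1 − ζ₂)(1 − ζ₃)⋯(1 − ζₙ)` in the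
group ring `ℤSₙ`, where `ζₖ` is the descending cycle `(k … 2 1)`. -/
noncomputable def lnZ (n : ℕ) : MonoidAlgebra ℤ (Equiv.Perm (Fin n)) :=
  (((List.finRange n).drop 1).map fun i =>
      (1 : MonoidAlgebra ℤ (Equiv.Perm (Fin n))) -
        MonoidAlgebra.of ℤ (Equiv.Perm (Fin n)) (Fin.cycleRange i)⁻¹).prod

/-- The action of `σ ∈ Sₙ` on a 1-indexed position `i ∈ [n] = {1, …, n}`. -/
def pact (n : ℕ) (σ : Equiv.Perm (Fin n)) (i : ℕ) : ℕ :=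
  if h : 1 ≤ i ∧ i ≤ n then (σ ⟨i - 1, by omega⟩).val + 1 else i

/-- `hₙ(I) = ψ(lₙ·Ī) ∈ ℤ[x₁, …, xₙ]`, where `Ī` is the 2-block ordered partition
`([n] ∖ I, I)` and `ψ` sends `σ·Ī` to the monomial `x_{σ(I)} = ∏_{i ∈ I} x_{σ(i)}`. -/
noncomputable def hpoly (n : ℕ) (I : Finset ℕ) : MvPolynomial ℕ ℤ :=
  (lnZ n).coeff.sum fun σ c => c • ∏ i ∈ I, X (pact n σ i)

/-- The descending cycle `ζₙ = (n … 2 1)` acting on 1-indexed positions. -/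
def zetaN (n : ℕ) (i : ℕ) : ℕ :=
  if i = 1 then n else if 2 ≤ i ∧ i ≤ n then i - 1 else i

/-- The convention `p_{n−1}(I') = p_{n−1}(I' ∖ {n})·xₙ` whenever `n ∈ I'`. -/
noncomputable def paux (p : Finset ℕ → MvPolynomial ℕ ℤ) (n : ℕ) (J : Finset ℕ) :
    MvPolynomial ℕ ℤ :=
  if n ∈ J then p (J.erase n) * X n else p J

/-- The Pascal descent polynomial `pₙ(I)`, defined by the recursion
`pₙ({i}) = (−1)^{i−1} C(n−1, i−1)` and `pₙ(I) = p_{n−1}(I) − p_{n−1}(ζₙ I)` otherwise,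
with the convention `p_{n−1}(I') = p_{n−1}(I' ∖ {n})·xₙ` whenever `n ∈ I'`. -/
noncomputable def pdef : ℕ → Finset ℕ → MvPolynomial ℕ ℤ
  | 0, _ => 0
  | n + 1, I =>
    if h1 : I.card = 1 then
      C ((-1 : ℤ) ^ (I.min' (Finset.card_pos.mp (by omega)) - 1) *
        (n.choose (I.min' (Finset.card_pos.mp (by omega)) - 1) : ℤ))
    else
      paux (pdef n) (n + 1) I - paux (pdef n) (n + 1) (I.image (zetaN (n + 1)))


lemma zetaN_inj {k : ℕ} (hk : 1 ≤ k) : Function.Injective (zetaN k) := by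
  intro a b h
  unfold zetaN at h
  split_ifs at h <;> omega

lemma zetaN_fixed {k m : ℕ} (h : k < m) (h2 : 2 ≤ m) : zetaN k m = m := by
  unfold zetaN; split_ifs <;> omega

lemma zetaN_maps {k n i : ℕ} (hk1 : 1 ≤ k) (hk : k ≤ n) (h1 : 1 ≤ i) (h2 : i ≤ n) :
    1 ≤ zetaN k i ∧ zetaN k i ≤ n := by
  unfold zetaN; split_ifs <;> omega

lemma pact_one (n i : ℕ) : pact n (1 : Equiv.Perm (Fin n)) i = i := by
  unfold pact
  split
  · next h => simp only [Equiv.Perm.one_apply]; omega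
  · rfl

lemma pact_mul (n : ℕ) (σ τ : Equiv.Perm (Fin n)) (i : ℕ) :
    pact n (σ * τ) i = pact n σ (pact n τ i) := by
  unfold pact
  by_cases h : 1 ≤ i ∧ i ≤ n
  · have h2 : (τ ⟨i - 1, by omega⟩).val < n := (τ _).isLt
    rw [dif_pos h, dif_pos h, dif_pos (by omega)]
    simp only [Equiv.Perm.mul_apply, Nat.add_sub_cancel]
  · rw [dif_neg h, dif_neg h, dif_neg h]

lemma pact_injective (n : ℕ) (σ : Equiv.Perm (Fin n)) : Function.Injective (pact n σ) := by
  have h : Function.LeftInverse (pact n σ⁻¹) (pact n σ) := fun i => by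
    rw [← pact_mul, inv_mul_cancel, pact_one]
  exact h.injective

lemma pact_cycleRange (n : ℕ) (j : Fin n) (i : ℕ) :
    pact n (Fin.cycleRange j)⁻¹ i = zetaN (j.val + 1) i := by
  obtain ⟨m, rfl⟩ : ∃ m, n = m + 1 := ⟨n - 1, by have := j.pos; omega⟩
  unfold pact zetaN
  by_cases h : 1 ≤ i ∧ i ≤ m + 1
  · rw [dif_pos h]
    by_cases h1 : i = 1
    · rw [if_pos h1]
      subst h1
      have h0 : (⟨1 - 1, by omega⟩ : Fin (m+1)) = 0 := rfl
      rw [h0, show (Fin.cycleRange j)⁻¹ (0 : Fin (m+1)) = j by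
        rw [Equiv.Perm.inv_eq_iff_eq, Fin.cycleRange_of_eq rfl]]
    · by_cases h2 : i ≤ j.val + 1
      · rw [if_neg h1, if_pos ⟨by omega, h2⟩]
        have hx : (⟨i - 2, by omega⟩ : Fin (m+1)) < j := by
          rw [Fin.lt_def]; show i - 2 < j.val; omega
        have hlast : (⟨i - 2, by omega⟩ : Fin (m+1)) < Fin.last m := by
          rw [Fin.lt_def]; show i - 2 < m; omega
        have key : (Fin.cycleRange j)⁻¹ (⟨i - 1, by omega⟩ : Fin (m+1)) = ⟨i - 2, by omega⟩ := by
          rw [Equiv.Perm.inv_eq_iff_eq, Fin.cycleRange_of_lt hx]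
          apply Fin.ext
          rw [Fin.val_add_one_of_lt hlast]
          show i - 1 = i - 2 + 1
          omega
        rw [key]
        show i - 2 + 1 = i - 1
        omega
      · rw [if_neg h1, if_neg (by omega)]
        have hgt : j < (⟨i - 1, by omega⟩ : Fin (m+1)) := by
          rw [Fin.lt_def]; show j.val < i - 1; omega
        have key : (Fin.cycleRange j)⁻¹ (⟨i - 1, by omega⟩ : Fin (m+1)) = ⟨i - 1, by omega⟩ := by
          rw [Equiv.Perm.inv_eq_iff_eq, Fin.cycleRange_of_gt hgt]
        rw [key]
        show i - 1 + 1 = i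
        omega
  · rw [dif_neg h, if_neg (by omega), if_neg (by omega)]

noncomputable def Gr : List ℕ → Finset ℕ → MvPolynomial ℕ ℤ
  | [], I => ∏ i ∈ I, X i
  | k :: t, I => Gr t I - Gr t (I.image (zetaN k))

def dl : ℕ → List ℕ
  | 0 => []
  | k + 1 => (k + 2) :: dl k

noncomputable def Psi (n : ℕ) (I : Finset ℕ) (a : MonoidAlgebra ℤ (Equiv.Perm (Fin n))) :
    MvPolynomial ℕ ℤ :=
  a.coeff.sum fun σ c => c • ∏ i ∈ I, X (pact n σ i)

lemma Psi_single (n : ℕ) (I : Finset ℕ) (σ : Equiv.Perm (Fin n)) (c : ℤ) :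
    Psi n I (MonoidAlgebra.single σ c) = c • ∏ i ∈ I, X (pact n σ i) := by
  unfold Psi; rw [MonoidAlgebra.coeff_single]
  exact Finsupp.sum_single_index (zero_smul _ _)

lemma Psi_add (n : ℕ) (I : Finset ℕ) (a b : MonoidAlgebra ℤ (Equiv.Perm (Fin n))) :
    Psi n I (a + b) = Psi n I a + Psi n I b := by
  unfold Psi; rw [MonoidAlgebra.coeff_add]
  exact Finsupp.sum_add_index' (fun _ => zero_smul _ _) (fun _ b₁ b₂ => add_smul b₁ b₂ _)

lemma Psi_sub (n : ℕ) (I : Finset ℕ) (a b : MonoidAlgebra ℤ (Equiv.Perm (Fin n))) :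
    Psi n I (a - b) = Psi n I a - Psi n I b := by
  unfold Psi; rw [MonoidAlgebra.coeff_sub]
  exact Finsupp.sum_sub_index (fun _ b₁ b₂ => sub_smul b₁ b₂ _)

lemma Psi_one (n : ℕ) (I : Finset ℕ) :
    Psi n I 1 = ∏ i ∈ I, X i := by
  have h1 : (1 : MonoidAlgebra ℤ (Equiv.Perm (Fin n))) = MonoidAlgebra.single 1 1 := rfl
  rw [h1, Psi_single, one_smul]
  exact Finset.prod_congr rfl fun i _ => by rw [pact_one]

lemma Psi_mul_of (n : ℕ) (I : Finset ℕ) (a : MonoidAlgebra ℤ (Equiv.Perm (Fin n)))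
    (g : Equiv.Perm (Fin n)) :
    Psi n I (a * MonoidAlgebra.of ℤ (Equiv.Perm (Fin n)) g) = Psi n (I.image (pact n g)) a := by
  induction a using MonoidAlgebra.induction_linear with
  | zero => rw [zero_mul]; simp [Psi]
  | add f g hf hg => rw [add_mul, Psi_add, Psi_add, hf, hg]
  | single σ c =>
    rw [MonoidAlgebra.of_apply,
      MonoidAlgebra.single_mul_single, Psi_single, Psi_single, mul_one]
    congr 1
    rw [Finset.prod_image (fun x _ y _ h => pact_injective n g h)]
    exact Finset.prod_congr rfl fun i _ => by rw [← pact_mul]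

lemma Psi_list (n : ℕ) (l : List (Fin n)) (I : Finset ℕ) :
    Psi n I ((l.map fun j =>
        (1 : MonoidAlgebra ℤ (Equiv.Perm (Fin n))) -
          MonoidAlgebra.of ℤ (Equiv.Perm (Fin n)) (Fin.cycleRange j)⁻¹).prod) =
      Gr (l.reverse.map fun j : Fin n => j.val + 1) I := by
  induction l using List.reverseRecOn generalizing I with
  | nil => simpa [Gr] using Psi_one n I
  | append_singleton l j ih =>
    rw [List.map_append, List.prod_append, List.map_singleton, List.prod_singleton,
      mul_sub, mul_one, Psi_sub, Psi_mul_of, List.reverse_append, List.reverse_singleton,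
      List.singleton_append, List.map_cons]
    show _ = Gr _ I - Gr _ (I.image (zetaN (j.val + 1)))
    rw [ih, show I.image (pact n (Fin.cycleRange j)⁻¹) = I.image (zetaN (j.val + 1)) from
      Finset.image_congr fun x _ => pact_cycleRange n j x, ih]

lemma dl_eq_reverse_range' (k : ℕ) : (List.range' 2 k).reverse = dl k := by
  induction k with
  | zero => rfl
  | succ k ih =>
    rw [List.range'_concat, List.reverse_append, List.reverse_singleton, List.singleton_append, ih]
    show ((2 + 1 * k) :: dl k) = dl (k + 1)
    rw [show 2 + 1 * k = k + 2 by omega]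
    rfl

lemma hpoly_eq_Gr (n : ℕ) (I : Finset ℕ) : hpoly n I = Gr (dl (n - 1)) I := by
  have h0 : hpoly n I = Psi n I (lnZ n) := rfl
  rw [h0, lnZ, Psi_list]
  congr 1
  have hmap : ((List.finRange n).drop 1).map (fun j : Fin n => j.val + 1)
      = List.range' 2 (n - 1) := by
    have h1 : ((List.finRange n).map fun j : Fin n => j.val + 1)
        = (List.range n).map (fun x => x + 1) := by
      apply List.ext_getElem <;> simp
    have h2 : (List.range n).map (fun x => x + 1) = List.range' 1 n := by
      rw [List.range'_eq_map_range]
      exact List.map_congr_left fun x _ => by omega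
    rw [List.map_drop, h1, h2]
    cases n with
    | zero => rfl
    | succ m => rw [List.range'_succ]; rfl
  rw [List.map_reverse, hmap, dl_eq_reverse_range']

lemma mem_dl {k j : ℕ} (h : k ∈ dl j) : 2 ≤ k ∧ k ≤ j + 1 := by
  induction j with
  | zero => simp [dl] at h
  | succ j ih =>
    rw [dl, List.mem_cons] at h
    rcases h with h | h
    · omega
    · have := ih h; omega

lemma Gr_cons_empty (k : ℕ) (t : List ℕ) : Gr (k :: t) ∅ = 0 := by
  simp [Gr]

lemma Gr_dl_empty {m : ℕ} (hm : 1 ≤ m) : Gr (dl m) ∅ = 0 := by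
  obtain ⟨k, rfl⟩ : ∃ k, m = k + 1 := ⟨m - 1, by omega⟩
  rw [dl]; exact Gr_cons_empty _ _

lemma Gr_extract (l : List ℕ) (m : ℕ) (hl : ∀ k ∈ l, 2 ≤ k ∧ k < m) :
    ∀ I : Finset ℕ, m ∈ I → Gr l I = Gr l (I.erase m) * X m := by
  induction l with
  | nil =>
    intro I hm
    exact (Finset.prod_erase_mul I _ hm).symm
  | cons k t ih =>
    intro I hm
    obtain ⟨hk2, hkm⟩ := hl k List.mem_cons_self
    have hz : zetaN k m = m := zetaN_fixed hkm (by omega)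
    have hinj : Function.Injective (zetaN k) := zetaN_inj (by omega)
    have himg : (I.image (zetaN k)).erase m = (I.erase m).image (zetaN k) := by
      conv_lhs => rw [← hz]
      rw [Finset.image_erase hinj]
    have hmem : m ∈ I.image (zetaN k) := hz ▸ Finset.mem_image_of_mem _ hm
    have ht : ∀ k' ∈ t, 2 ≤ k' ∧ k' < m := fun k' hk' => hl k' (List.mem_cons_of_mem _ hk')
    show Gr t I - Gr t (I.image (zetaN k)) = _
    rw [ih ht I hm, ih ht _ hmem, himg]
    show _ = (Gr t (I.erase m) - Gr t ((I.erase m).image (zetaN k))) * X m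
    ring

lemma pdef_singleton (m i : ℕ) :
    pdef (m + 1) {i} = C ((-1 : ℤ) ^ (i - 1) * (m.choose (i - 1) : ℤ)) := by
  rw [pdef, dif_pos (Finset.card_singleton i)]
  simp [Finset.min'_singleton]

lemma pdef_recur (m : ℕ) (I : Finset ℕ) (h : I.card ≠ 1) :
    pdef (m + 1) I =
      paux (pdef m) (m + 1) I - paux (pdef m) (m + 1) (I.image (zetaN (m + 1))) := by
  rw [pdef, dif_neg h]

lemma subset_pair {I : Finset ℕ} (hI : I ⊆ Finset.Icc 1 2) :
    I = ∅ ∨ I = {1} ∨ I = {2} ∨ I = {1, 2} := by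
  have hmem : ∀ x ∈ I, x = 1 ∨ x = 2 := fun x hx => by
    have := hI hx; rw [Finset.mem_Icc] at this; omega
  by_cases h1 : 1 ∈ I <;> by_cases h2 : 2 ∈ I
  · right; right; right
    apply Finset.Subset.antisymm
    · intro x hx; rcases hmem x hx with rfl | rfl <;> simp
    · intro x hx; simp at hx; rcases hx with rfl | rfl <;> assumption
  · right; left
    apply Finset.Subset.antisymm
    · intro x hx; rcases hmem x hx with rfl | rfl
      · simp
      · exact absurd hx h2
    · intro x hx; simp at hx; subst hx; assumption
  · right; right; left
    apply Finset.Subset.antisymm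
    · intro x hx; rcases hmem x hx with rfl | rfl
      · exact absurd hx h1
      · simp
    · intro x hx; simp at hx; subst hx; assumption
  · left
    apply Finset.eq_empty_of_forall_notMem
    intro x hx; rcases hmem x hx with rfl | rfl <;> [exact h1 hx; exact h2 hx]

lemma zetaN_two_one : zetaN 2 1 = 2 := rfl

lemma zetaN_two_two : zetaN 2 2 = 1 := by simp [zetaN]

lemma main_lemma (n : ℕ) (hn : 2 ≤ n) :
    ∀ I ⊆ Finset.Icc 1 n, Gr (dl (n - 1)) I = (X 1 - X 2) * pdef n I := by
  induction n, hn using Nat.le_induction with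
  | base =>
    intro I hI
    rcases subset_pair hI with rfl | rfl | rfl | rfl
    · show Gr [2] ∅ = _
      rw [Gr_cons_empty]
      rw [pdef_recur 1 ∅ (by simp), Finset.image_empty, sub_self, mul_zero]
    · show Gr [2] {1} = _
      rw [pdef_singleton]
      simp only [Gr, Finset.image_singleton, zetaN_two_one, Finset.prod_singleton]
      norm_num
    · show Gr [2] {2} = _
      rw [pdef_singleton]
      simp only [Gr, Finset.image_singleton, zetaN_two_two, Finset.prod_singleton]
      have : ((-1 : ℤ) ^ (2 - 1) * ((Nat.choose 1 (2 - 1) : ℕ) : ℤ)) = -1 := by norm_num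
      rw [this]
      rw [map_neg, map_one, mul_neg_one, neg_sub]
    · show Gr [2] {1, 2} = _
      have himg : ({1, 2} : Finset ℕ).image (zetaN 2) = {1, 2} := by
        rw [Finset.image_insert, Finset.image_singleton, zetaN_two_one, zetaN_two_two]
        decide
      simp only [Gr, himg, sub_self]
      rw [pdef_recur 1 {1, 2} (by decide), himg, sub_self, mul_zero]
  | succ n hn ih =>
    obtain ⟨m, rfl⟩ : ∃ m, n = m + 1 := ⟨n - 1, by omega⟩
    have hm1 : 1 ≤ m := by omega
    intro I hI
    have hdlk : ∀ k ∈ dl m, 2 ≤ k ∧ k < m + 2 := fun k hk => by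
      have := mem_dl hk; omega
    simp only [Nat.add_sub_cancel] at ih ⊢
    -- helper H
    have H : ∀ J ⊆ Finset.Icc 1 (m + 2),
        Gr (dl m) J = (X 1 - X 2) * paux (pdef (m + 1)) (m + 2) J := by
      intro J hJ
      by_cases hmem : m + 2 ∈ J
      · rw [Gr_extract (dl m) (m + 2) hdlk J hmem,
          ih (J.erase (m + 2)) (by
            intro x hx
            have hxJ := Finset.mem_of_mem_erase hx
            have hne := Finset.ne_of_mem_erase hx
            have := hJ hxJ
            rw [Finset.mem_Icc] at *
            omega)]
        rw [paux, if_pos hmem, mul_assoc]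
      · rw [ih J (by
          intro x hx
          have := hJ hx
          have hne : x ≠ m + 2 := fun h => hmem (h ▸ hx)
          rw [Finset.mem_Icc] at *
          omega)]
        rw [paux, if_neg hmem]
    have hGr : Gr (dl (m + 1)) I = Gr (dl m) I - Gr (dl m) (I.image (zetaN (m + 2))) := by
      rw [dl]; rfl
    by_cases hc : I.card = 1
    · obtain ⟨i, rfl⟩ := Finset.card_eq_one.mp hc
      have hi : 1 ≤ i ∧ i ≤ m + 2 := by
        have := hI (Finset.mem_singleton_self i); rw [Finset.mem_Icc] at this; exact this
      rw [hGr, Finset.image_singleton]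
      rw [show pdef (m + 2) {i} = pdef ((m + 1) + 1) {i} from rfl, pdef_singleton]
      rcases Nat.lt_trichotomy i 2 with h1 | h2
      · -- i = 1
        have : i = 1 := by omega
        subst this
        have hz : zetaN (m + 2) 1 = m + 2 := rfl
        rw [hz, Gr_extract (dl m) (m + 2) hdlk {m + 2} (Finset.mem_singleton_self _),
          Finset.erase_singleton, Gr_dl_empty hm1, zero_mul,
          ih {1} (by intro x hx; simp at hx; subst hx; rw [Finset.mem_Icc]; omega), pdef_singleton]
        norm_num
      · by_cases htop : i = m + 2
        · subst htop
          have hz : zetaN (m + 2) (m + 2) = m + 1 := by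
            unfold zetaN; rw [if_neg (by omega), if_pos (by omega)]; omega
          rw [hz, Gr_extract (dl m) (m + 2) hdlk {m + 2} (Finset.mem_singleton_self _),
            Finset.erase_singleton, Gr_dl_empty hm1, zero_mul,
            ih {m + 1} (by intro x hx; simp at hx; subst hx; rw [Finset.mem_Icc]; omega),
            pdef_singleton]
          rw [show m + 1 - 1 = m from by omega, show m + 2 - 1 = m + 1 from by omega,
            Nat.choose_self, Nat.choose_self]
          push_cast
          rw [mul_one, mul_one, pow_succ, mul_neg_one, map_neg]
          ring
        · -- 2 ≤ i ≤ m + 1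
          have hile : i ≤ m + 1 := by omega
          have h2i : 2 ≤ i := by omega
          have hz : zetaN (m + 2) i = i - 1 := by
            unfold zetaN; rw [if_neg (by omega), if_pos (by omega)]
          rw [hz, ih {i} (by intro x hx; simp at hx; subst hx; rw [Finset.mem_Icc]; omega),
            pdef_singleton,
            ih {i - 1} (by intro x hx; simp at hx; subst hx; rw [Finset.mem_Icc]; omega),
            pdef_singleton]
          obtain ⟨j, rfl⟩ : ∃ j, i = j + 2 := ⟨i - 2, by omega⟩
          simp only [show j + 2 - 1 = j + 1 from by omega, show j + 1 - 1 = j from by omega]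
          rw [Nat.choose_succ_succ m j]
          rw [← mul_sub, ← map_sub]
          congr 1
          simp only [Nat.succ_eq_add_one]
          push_cast
          ring
    · rw [hGr, H I hI,
        H (I.image (zetaN (m + 2))) (by
          intro x hx
          rw [Finset.mem_image] at hx
          obtain ⟨y, hy, rfl⟩ := hx
          have := hI hy
          rw [Finset.mem_Icc] at *
          exact zetaN_maps (by omega) (by omega) this.1 this.2),
        show pdef (m + 2) I = pdef ((m + 1) + 1) I from rfl,
        pdef_recur (m + 1) I hc, mul_sub]

/-- `hₙ(I)` is divisible by `x₁ − x₂`, and the quotient `pₙ(I)` satisfies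
`pₙ({i}) = (−1)^{i−1} C(n−1, i−1)` for singletons and
`pₙ(I) = p_{n−1}(I) − p_{n−1}(ζₙ I)` otherwise (with the convention
`p_{n−1}(I') = p_{n−1}(I' ∖ {n})·xₙ` whenever `n ∈ I'`). -/
theorem hpoly_eq_sub_mul_pdef (n : ℕ) (hn : 2 ≤ n) (I : Finset ℕ)
    (hI : I ⊆ Finset.Icc 1 n) :
    (X 1 - X 2 ∣ hpoly n I) ∧
    hpoly n I = (X 1 - X 2) * pdef n I ∧
    (∀ i : ℕ, I = {i} →
      pdef n I = C ((-1 : ℤ) ^ (i - 1) * ((n - 1).choose (i - 1) : ℤ))) ∧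
    (I.card ≠ 1 →
      pdef n I =
        paux (pdef (n - 1)) n I - paux (pdef (n - 1)) n (I.image (zetaN n))) := by
  have h2 : hpoly n I = (X 1 - X 2) * pdef n I := by
    rw [hpoly_eq_Gr]; exact main_lemma n hn I hI
  refine ⟨⟨pdef n I, h2⟩, h2, ?_, ?_⟩
  · intro i hi
    subst hi
    obtain ⟨m, rfl⟩ : ∃ m, n = m + 1 := ⟨n - 1, by omega⟩
    rw [pdef_singleton]
    simp only [Nat.add_sub_cancel]
  · intro hc
    obtain ⟨m, rfl⟩ : ∃ m, n = m + 1 := ⟨n - 1, by omega⟩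
    rw [pdef_recur m I hc]
    simp only [Nat.add_sub_cancel]
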